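/- Let θ ≥ 1, A = 1, and let P ≪ Q be probability measures on a measurable space with D_2(P‖Q) < ∞, where D_2 denotes the Rényi divergence of order 2. Then the f-divergence with f(x)=x(log(x+1))^{1/θ} satisfies D_f(P‖Q) ≤ (D_α(P‖Q) + log 2)^{1/θ} for any α ≥ 2, where D_α is the Rényi divergence of order α. -/

import Mathlib

open Real MeasureTheory

lemma weighted_jensen_rpow {Ω : Type*} [MeasurableSpace Ω] (μ : Measure Ω)
    (w f : Ω → ℝ) (hw : ∀ x, 0 ≤ w x) (hf : ∀ x, 0 ≤ f x)
    {p : ℝ} (hp : 0 < p) (hp1 : p ≤ 1)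
    (hwInt : Integrable w μ)
    (hw1 : ∫ x, w x ∂μ = 1)
    (hwf : Integrable (fun x => w x * f x) μ)
    (hwfp : Integrable (fun x => w x * f x ^ p) μ) :
    ∫ x, w x * f x ^ p ∂μ ≤ (∫ x, w x * f x ∂μ) ^ p := by
  set c := ∫ x, w x * f x ∂μ with hc
  have hc0 : 0 ≤ c := integral_nonneg fun x => mul_nonneg (hw x) (hf x)
  rcases eq_or_lt_of_le hc0 with hceq | hcpos
  · have hae : (fun x => w x * f x) =ᵐ[μ] 0 :=
      (integral_eq_zero_iff_of_nonneg (fun x => mul_nonneg (hw x) (hf x)) hwf).mp hceq.symm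
    have hae' : (fun x => w x * f x ^ p) =ᵐ[μ] 0 := by
      filter_upwards [hae] with x hx
      rcases mul_eq_zero.mp hx with h | h
      · simp [h]
      · simp [h, Real.zero_rpow hp.ne']
    rw [integral_congr_ae hae']
    simp [← hceq, Real.zero_rpow hp.ne']
  · have hcpow : c ^ (p - 1) * c = c ^ p := by
      rw [← Real.rpow_add_one hcpos.ne' (p - 1)]; ring_nf
    have key : ∀ x, w x * f x ^ p ≤ p * c ^ (p - 1) * (w x * f x) + (1 - p) * c ^ p * w x := by
      intro x
      have hgm := Real.geom_mean_le_arith_mean2_weighted (w₁ := p) (w₂ := 1 - p)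
        (p₁ := f x) (p₂ := c) hp.le (by linarith) (hf x) hc0 (by ring)
      have hone : c ^ (1 - p) * c ^ (p - 1) = 1 := by
        rw [← Real.rpow_add hcpos]; norm_num
      have h1 : f x ^ p ≤ (p * f x + (1 - p) * c) * c ^ (p - 1) := by
        calc f x ^ p = f x ^ p * c ^ (1 - p) * c ^ (p - 1) := by
              rw [mul_assoc, hone, mul_one]
        _ ≤ (p * f x + (1 - p) * c) * c ^ (p - 1) :=
              mul_le_mul_of_nonneg_right hgm (Real.rpow_nonneg hc0 _)
      calc w x * f x ^ p ≤ w x * ((p * f x + (1 - p) * c) * c ^ (p - 1)) :=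
            mul_le_mul_of_nonneg_left h1 (hw x)
      _ = p * c ^ (p - 1) * (w x * f x) + (1 - p) * (c ^ (p - 1) * c) * w x := by ring
      _ = p * c ^ (p - 1) * (w x * f x) + (1 - p) * c ^ p * w x := by rw [hcpow]
    have hInt2 : Integrable (fun x => p * c ^ (p - 1) * (w x * f x) + (1 - p) * c ^ p * w x) μ :=
      (hwf.const_mul _).add (hwInt.const_mul _)
    calc ∫ x, w x * f x ^ p ∂μ
        ≤ ∫ x, (p * c ^ (p - 1) * (w x * f x) + (1 - p) * c ^ p * w x) ∂μ :=
          integral_mono hwfp hInt2 key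
    _ = p * c ^ (p - 1) * c + (1 - p) * c ^ p * 1 := by
        rw [integral_add (hwf.const_mul _) (hwInt.const_mul _), integral_const_mul,
          integral_const_mul, hw1, ← hc]
    _ = p * (c ^ (p - 1) * c) + (1 - p) * c ^ p := by ring
    _ = c ^ p := by rw [hcpow]; ring


lemma rpow_le_one_add {y p : ℝ} (hy : 0 ≤ y) (hp : 0 < p) (hp1 : p ≤ 1) :
    y ^ p ≤ 1 + y := by
  rcases le_total y 1 with h | h
  · have := Real.rpow_le_one hy h hp.le; linarith
  · have h2 : y ^ p ≤ y ^ (1:ℝ) := Real.rpow_le_rpow_of_exponent_le h hp1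
    rw [Real.rpow_one] at h2; linarith

/-- For `θ ≥ 1`, `A = 1`, probability measures `P ≪ Q` with finite
Rényi-2 divergence, and any `α ≥ 2` (with finite Rényi-α divergence, expressed
through integrability of `(dP/dQ)^α`), the shifted-log `f`-divergence with
`f(x) = x (log(x+1))^(1/θ)` satisfies `D_f(P‖Q) ≤ (D_α(P‖Q) + log 2)^(1/θ)`,
where `D_α(P‖Q) = (α-1)⁻¹ log ∫ (dP/dQ)^α dQ`. -/
theorem stmt6 {Ω : Type*} [MeasurableSpace Ω] (P Q : Measure Ω)
    [IsProbabilityMeasure P] [IsProbabilityMeasure Q]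
    (hPQ : P ≪ Q) (θ α : ℝ) (hθ : 1 ≤ θ) (hα : 2 ≤ α)
    (hD2 : Integrable (fun x => ((P.rnDeriv Q x).toReal) ^ (2:ℝ)) Q)
    (hDα : Integrable (fun x => ((P.rnDeriv Q x).toReal) ^ α) Q) :
    ∫ x, (P.rnDeriv Q x).toReal * (Real.log ((P.rnDeriv Q x).toReal + 1)) ^ (1/θ) ∂Q
      ≤ ((α - 1)⁻¹ * Real.log (∫ x, ((P.rnDeriv Q x).toReal) ^ α ∂Q)
          + Real.log 2) ^ (1/θ) := by
  set t : Ω → ℝ := fun x => (P.rnDeriv Q x).toReal with ht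
  have ht0 : ∀ x, 0 ≤ t x := fun x => ENNReal.toReal_nonneg
  have htm : Measurable t := (Measure.measurable_rnDeriv P Q).ennreal_toReal
  have htInt : Integrable t Q := Measure.integrable_toReal_rnDeriv
  have ht1 : ∫ x, t x ∂Q = 1 := by
    rw [ht]; rw [Measure.integral_toReal_rnDeriv hPQ]; simp
  set p := 1/θ with hpdef
  have hθ0 : (0:ℝ) < θ := by linarith
  have hp : 0 < p := by positivity
  have hp1 : p ≤ 1 := by rw [hpdef]; rw [div_le_one hθ0]; linarith
  -- rewrite squares
  have hsq : ∀ x, t x ^ (2:ℝ) = t x * t x := fun x => by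
    rw [show (2:ℝ) = ((2:ℕ):ℝ) by norm_num, Real.rpow_natCast]; ring
  have hD2' : Integrable (fun x => t x * t x) Q := by
    have := hD2; rwa [show (fun x => t x ^ (2:ℝ)) = fun x => t x * t x from funext hsq] at this
  set q := α - 1 with hqdef
  have hq1 : (1:ℝ) ≤ q := by rw [hqdef]; linarith
  have hq0 : (0:ℝ) < q := by linarith
  have hαsplit : ∀ x, t x ^ α = t x * t x ^ q := fun x => by
    rw [show α = 1 + q by rw [hqdef]; ring,
      Real.rpow_add_of_nonneg (ht0 x) zero_le_one (by linarith), Real.rpow_one]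
  have hDα' : Integrable (fun x => t x * t x ^ q) Q := by
    have := hDα; rwa [show (fun x => t x ^ α) = fun x => t x * t x ^ q from funext hαsplit] at this
  set I2 := ∫ x, t x * t x ∂Q with hI2
  set Iα := ∫ x, t x * t x ^ q ∂Q with hIα
  -- I2 ≥ 1
  have hI2_1 : (1:ℝ) ≤ I2 := by
    have hmono : ∫ x, 2 * t x ∂Q ≤ ∫ x, (t x * t x + 1) ∂Q := by
      apply integral_mono (htInt.const_mul 2) (hD2'.add (integrable_const 1))
      intro x; simp only [Pi.add_apply]; nlinarith [sq_nonneg (t x - 1)]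
    rw [integral_const_mul, ht1, integral_add hD2' (integrable_const 1)] at hmono
    simp at hmono; linarith
  have hI2pos : (0:ℝ) < I2 := by linarith
  -- log bounds
  have hlog0 : ∀ x, 0 ≤ Real.log (t x + 1) := fun x => Real.log_nonneg (by linarith [ht0 x])
  have hlogle : ∀ x, Real.log (t x + 1) ≤ t x := fun x => by
    have := Real.log_le_sub_one_of_pos (show (0:ℝ) < t x + 1 by linarith [ht0 x])
    linarith
  -- integrability of t * log(t+1)
  have hlogm : Measurable fun x => Real.log (t x + 1) :=
    Real.measurable_log.comp (htm.add_const 1)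
  have hL : Integrable (fun x => t x * Real.log (t x + 1)) Q := by
    apply Integrable.mono' hD2' ((htm.mul hlogm).aestronglyMeasurable)
    apply ae_of_all; intro x
    simp only [Pi.mul_apply]
    rw [Real.norm_eq_abs, abs_of_nonneg (mul_nonneg (ht0 x) (hlog0 x))]
    exact mul_le_mul_of_nonneg_left (hlogle x) (ht0 x)
  set L := ∫ x, t x * Real.log (t x + 1) ∂Q with hLdef
  have hL0 : 0 ≤ L := integral_nonneg fun x => mul_nonneg (ht0 x) (hlog0 x)
  -- integrability of LHS
  have hLHSInt : Integrable (fun x => t x * Real.log (t x + 1) ^ p) Q := by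
    apply Integrable.mono' (htInt.add hL)
      ((htm.mul (hlogm.pow_const p)).aestronglyMeasurable)
    apply ae_of_all; intro x
    simp only [Pi.mul_apply, Pi.add_apply]
    rw [Real.norm_eq_abs,
      abs_of_nonneg (mul_nonneg (ht0 x) (Real.rpow_nonneg (hlog0 x) p))]
    calc t x * Real.log (t x + 1) ^ p ≤ t x * (1 + Real.log (t x + 1)) :=
          mul_le_mul_of_nonneg_left (rpow_le_one_add (hlog0 x) hp hp1) (ht0 x)
    _ = t x + t x * Real.log (t x + 1) := by ring
  -- Jensen: LHS ≤ L^p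
  have step1 : ∫ x, t x * Real.log (t x + 1) ^ p ∂Q ≤ L ^ p :=
    weighted_jensen_rpow Q t (fun x => Real.log (t x + 1)) ht0 hlog0 hp hp1
      htInt ht1 hL hLHSInt
  -- L ≤ log 2 + log I2
  have step2 : L ≤ Real.log 2 + Real.log I2 := by
    set c := I2 + 1 with hcdef
    have hcpos : (0:ℝ) < c := by linarith
    have key : ∀ x, t x * Real.log (t x + 1) ≤
        (t x * t x + t x) / c - t x + Real.log c * t x := by
      intro x
      have htx1 : (0:ℝ) < t x + 1 := by linarith [ht0 x]
      have hlog : Real.log (t x + 1) ≤ (t x + 1) / c - 1 + Real.log c := by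
        have hdiv : (0:ℝ) < (t x + 1) / c := div_pos htx1 hcpos
        have h1 := Real.log_le_sub_one_of_pos hdiv
        rw [Real.log_div htx1.ne' hcpos.ne'] at h1
        linarith
      have := mul_le_mul_of_nonneg_left hlog (ht0 x)
      calc t x * Real.log (t x + 1) ≤ t x * ((t x + 1) / c - 1 + Real.log c) := this
      _ = (t x * t x + t x) / c - t x + Real.log c * t x := by field_simp
    have hB : Integrable (fun x => t x * t x + t x) Q := hD2'.add htInt
    have hC : Integrable (fun x => (t x * t x + t x) / c) Q := hB.div_const c
    have hA : Integrable (fun x => (t x * t x + t x) / c - t x) Q := hC.sub htInt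
    have hIntR : Integrable
        (fun x => (t x * t x + t x) / c - t x + Real.log c * t x) Q :=
      hA.add (htInt.const_mul _)
    have hmono := integral_mono hL hIntR key
    rw [integral_add hA (htInt.const_mul _), integral_sub hC htInt, integral_div,
      integral_add hD2' htInt, ht1, integral_const_mul, ht1, ← hI2] at hmono
    have hLlogc : L ≤ Real.log c := by
      have : (I2 + 1) / c = 1 := by rw [hcdef]; field_simp
      rw [this] at hmono; linarith
    have h2c : c ≤ 2 * I2 := by rw [hcdef]; linarith
    calc L ≤ Real.log c := hLlogc
    _ ≤ Real.log (2 * I2) := Real.log_le_log hcpos h2c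
    _ = Real.log 2 + Real.log I2 := Real.log_mul two_ne_zero hI2pos.ne'
  -- log I2 ≤ q⁻¹ log Iα
  have step3 : Real.log I2 ≤ q⁻¹ * Real.log Iα := by
    have hfq0 : ∀ x, 0 ≤ t x ^ q := fun x => Real.rpow_nonneg (ht0 x) q
    have hcollapse : ∀ x, (t x ^ q) ^ (1/q) = t x := fun x => by
      rw [← Real.rpow_mul (ht0 x), mul_one_div, div_self hq0.ne', Real.rpow_one]
    have hwfp : Integrable (fun x => t x * (t x ^ q) ^ (1/q)) Q := by
      have : (fun x => t x * (t x ^ q) ^ (1/q)) = fun x => t x * t x :=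
        funext fun x => by rw [hcollapse x]
      rw [this]; exact hD2'
    have hq1p : 1/q ≤ 1 := by rw [div_le_one hq0]; exact hq1
    have hjq := weighted_jensen_rpow Q t (fun x => t x ^ q) ht0 hfq0
      (by positivity) hq1p htInt ht1 hDα' hwfp
    have hI2le : I2 ≤ Iα ^ (1/q) := by
      have : (∫ x, t x * (t x ^ q) ^ (1/q) ∂Q) = I2 := by
        rw [hI2]; congr 1; exact funext fun x => by rw [hcollapse x]
      rw [this] at hjq; exact hjq
    have hIαpos : (0:ℝ) < Iα := by
      by_contra h
      push_neg at h
      have hIα0 : Iα = 0 :=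
        le_antisymm h (integral_nonneg fun x => mul_nonneg (ht0 x) (hfq0 x))
      rw [hIα0, Real.zero_rpow (by positivity : (1/q) ≠ 0)] at hI2le
      linarith
    calc Real.log I2 ≤ Real.log (Iα ^ (1/q)) := Real.log_le_log hI2pos hI2le
    _ = (1/q) * Real.log Iα := Real.log_rpow hIαpos _
    _ = q⁻¹ * Real.log Iα := by rw [one_div]
  -- combine
  have hgoalIα : (∫ x, t x ^ α ∂Q) = Iα := by
    rw [hIα]; congr 1; exact funext hαsplit
  rw [hgoalIα]
  have hlogI2_0 : 0 ≤ Real.log I2 := Real.log_nonneg hI2_1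
  have hbase0 : 0 ≤ Real.log 2 + Real.log I2 := by
    have := Real.log_nonneg (by norm_num : (1:ℝ) ≤ 2); linarith
  calc ∫ x, t x * Real.log (t x + 1) ^ p ∂Q ≤ L ^ p := step1
  _ ≤ (Real.log 2 + Real.log I2) ^ p := Real.rpow_le_rpow hL0 step2 hp.le
  _ ≤ (q⁻¹ * Real.log Iα + Real.log 2) ^ p := by
      apply Real.rpow_le_rpow hbase0 ?_ hp.le
      linarith
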